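/- arXiv:solv-int/9909004 — 11 statements merged into one kernel-verified Lean document; each statement's English description precedes it below -/
import Mathlib

section
/- Let a ∈ ℂ, let U ⊆ ℂ³ be an open set on which a differentiable function f : U → ℂ satisfies f(x)³·x₁x₂x₃ = 1 (so each x_k ≠ 0 on U), and set J̃_k(J,x) = J_k + i·a·f(x)·x_k for k = 1,2,3. Then: (i) for every (J,x) ∈ ℂ³ × U with x₁² + x₂² + x₃² = 0 and every i,j, the Lie–Poisson bracket satisfies {J̃_i, J̃_j}(J,x) = Σ_k ε_{ijk} J̃_k(J,x); (ii) for every (J,x) ∈ ℂ³ × U and every i,j, {J̃_i, x_j}(J,x) = Σ_k ε_{ijk} x_k. In other words, on the level set (x,x) = 0 the shift J ↦ J + i a (x₁x₂x₃)^{-1/3} x preserves the e(3,ℂ) Lie–Poisson bracket relations. -/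
/-- The Levi-Civita symbol on `Fin 3`: totally antisymmetric with `eps 0 1 2 = 1`. -/
def eps (i j k : Fin 3) : ℤ :=
  (((j : ℤ) - (i : ℤ)) * ((k : ℤ) - (i : ℤ)) * ((k : ℤ) - (j : ℤ))) / 2

/-- Partial derivative of `F(J,x)` with respect to `J_i`. -/
noncomputable def pdJ (F : (Fin 3 → ℂ) × (Fin 3 → ℂ) → ℂ)
    (p : (Fin 3 → ℂ) × (Fin 3 → ℂ)) (i : Fin 3) : ℂ :=
  fderiv ℂ F p (Pi.single i 1, 0)

/-- Partial derivative of `F(J,x)` with respect to `x_i`. -/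
noncomputable def pdx (F : (Fin 3 → ℂ) × (Fin 3 → ℂ) → ℂ)
    (p : (Fin 3 → ℂ) × (Fin 3 → ℂ)) (i : Fin 3) : ℂ :=
  fderiv ℂ F p (0, Pi.single i 1)

/-- The Lie–Poisson bracket of `e(3,ℂ)` on functions of `(J,x) ∈ ℂ³ × ℂ³`:
`{F,G} = Σ_{i,j,k} ε_{ijk} [ J_k F_{J_i} G_{J_j} + x_k (F_{J_i} G_{x_j} + F_{x_i} G_{J_j}) ]`. -/
noncomputable def e3Bracket (F G : (Fin 3 → ℂ) × (Fin 3 → ℂ) → ℂ)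
    (p : (Fin 3 → ℂ) × (Fin 3 → ℂ)) : ℂ :=
  ∑ i : Fin 3, ∑ j : Fin 3, ∑ k : Fin 3,
    (eps i j k : ℂ) *
      (p.1 k * pdJ F p i * pdJ G p j +
       p.2 k * (pdJ F p i * pdx G p j + pdx F p i * pdJ G p j))

/-- The shifted angular momentum `J̃_k(J,x) = J_k + i·a·f(x)·x_k`,
where `f` is a branch of `(x₁x₂x₃)^{-1/3}`. -/
noncomputable def Jtilde (a : ℂ) (f : (Fin 3 → ℂ) → ℂ) (k : Fin 3) :
    (Fin 3 → ℂ) × (Fin 3 → ℂ) → ℂ :=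
  fun p => p.1 k + Complex.I * a * f p.2 * p.2 k

/-- Auxiliary: the coordinate projection as a continuous linear map. -/
noncomputable def pr (i : Fin 3) : (Fin 3 → ℂ) →L[ℂ] ℂ := ContinuousLinearMap.proj i

/-- Auxiliary: all the derivative computations needed for the main theorem. -/
lemma shift_key (a : ℂ) (U : Set (Fin 3 → ℂ)) (hU : IsOpen U)
    (f : (Fin 3 → ℂ) → ℂ) (hf : DifferentiableOn ℂ f U)
    (hf3 : ∀ x ∈ U, f x ^ 3 * (x 0 * x 1 * x 2) = 1)
    (x : Fin 3 → ℂ) (hx : x ∈ U) (J : Fin 3 → ℂ) :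
    (∀ i : Fin 3, 3 * fderiv ℂ f x (Pi.single i 1) * x i + f x = 0) ∧
    (∀ k i : Fin 3, pdJ (Jtilde a f k) (J, x) i = (Pi.single i 1 : Fin 3 → ℂ) k) ∧
    (∀ k i : Fin 3, pdx (Jtilde a f k) (J, x) i =
      Complex.I * a * (f x * (Pi.single i 1 : Fin 3 → ℂ) k +
        x k * fderiv ℂ f x (Pi.single i 1))) ∧
    (∀ k i : Fin 3, pdJ (fun p : (Fin 3 → ℂ) × (Fin 3 → ℂ) => p.2 k) (J, x) i = 0) ∧
    (∀ k i : Fin 3, pdx (fun p : (Fin 3 → ℂ) × (Fin 3 → ℂ) => p.2 k) (J, x) i =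
      (Pi.single i 1 : Fin 3 → ℂ) k) := by
  have hmem := hU.mem_nhds hx
  have hfd : HasFDerivAt f (fderiv ℂ f x) x := (hf.differentiableAt hmem).hasFDerivAt
  have h1 := hf3 x hx
  refine ⟨?_, ?_⟩
  · -- the key differential identity 3 f'_i x_i + f = 0
    have hg : HasFDerivAt (fun y : Fin 3 → ℂ => f y ^ 3 * (y 0 * y 1 * y 2))
        ((f x ^ 3) • ((x 0 * x 1) • pr 2 + (x 2) • ((x 0) • pr 1 + (x 1) • pr 0))
          + (x 0 * x 1 * x 2) • ((f x * f x) • fderiv ℂ f x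
            + (f x) • ((f x) • fderiv ℂ f x + (f x) • fderiv ℂ f x))) x := by
      have hcube : HasFDerivAt (fun y => f y ^ 3)
          ((f x * f x) • fderiv ℂ f x
            + (f x) • ((f x) • fderiv ℂ f x + (f x) • fderiv ℂ f x)) x := by
        have h := (hfd.mul hfd).mul hfd
        have he : (f * f * f) = fun y => f y ^ 3 := by funext y; simp only [Pi.mul_apply]; ring
        rw [he] at h; exact h
      exact hcube.mul (((pr 0).hasFDerivAt.mul (pr 1).hasFDerivAt).mul (pr 2).hasFDerivAt)
    have hgz : fderiv ℂ (fun y : Fin 3 → ℂ => f y ^ 3 * (y 0 * y 1 * y 2)) x = 0 := by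
      have hev : (fun y : Fin 3 → ℂ => f y ^ 3 * (y 0 * y 1 * y 2)) =ᶠ[nhds x]
          (fun _ => (1 : ℂ)) := by
        filter_upwards [hmem] with y hy using hf3 y hy
      rw [hev.fderiv_eq]; exact fderiv_const_apply 1
    have hG := hg.fderiv.symm.trans hgz
    intro i
    have hz := congrArg (fun L : (Fin 3 → ℂ) →L[ℂ] ℂ => L (Pi.single i 1)) hG
    simp only [ContinuousLinearMap.add_apply, ContinuousLinearMap.smul_apply,
      ContinuousLinearMap.zero_apply, smul_eq_mul, pr, ContinuousLinearMap.proj_apply] at hz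
    have fin2mk : ∀ h : 2 < 3, (⟨2, h⟩ : Fin 3) = 2 := fun _ => rfl
    have fin1mk : ∀ h : 1 < 3, (⟨1, h⟩ : Fin 3) = 1 := fun _ => rfl
    have fin0mk : ∀ h : 0 < 3, (⟨0, h⟩ : Fin 3) = 0 := fun _ => rfl
    fin_cases i <;> simp only [fin0mk, fin1mk, fin2mk] at hz ⊢ <;>
      simp only [Pi.single_apply] at hz ⊢ <;> norm_num [Fin.ext_iff] at hz ⊢
    · linear_combination (x 0 * f x) * hz - (f x + 3 * (fderiv ℂ f x) (Pi.single 0 1) * x 0) * h1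
    · linear_combination (x 1 * f x) * hz - (f x + 3 * (fderiv ℂ f x) (Pi.single 1 1) * x 1) * h1
    · linear_combination (x 2 * f x) * hz - (f x + 3 * (fderiv ℂ f x) (Pi.single 2 1) * x 2) * h1
  · -- the partial derivatives of J̃ and of the coordinates
    have hC : ∀ k : Fin 3, HasFDerivAt (fun p : (Fin 3 → ℂ) × (Fin 3 → ℂ) => p.2 k)
        ((pr k).comp (ContinuousLinearMap.snd ℂ (Fin 3 → ℂ) (Fin 3 → ℂ))) (J, x) := fun k =>
      ((pr k).comp (ContinuousLinearMap.snd ℂ (Fin 3 → ℂ) (Fin 3 → ℂ))).hasFDerivAt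
    have hJt : ∀ k : Fin 3, HasFDerivAt (Jtilde a f k)
        ((pr k).comp (ContinuousLinearMap.fst ℂ (Fin 3 → ℂ) (Fin 3 → ℂ))
          + (Complex.I * a) •
            ((f x) • ((pr k).comp (ContinuousLinearMap.snd ℂ (Fin 3 → ℂ) (Fin 3 → ℂ)))
            + (x k) • ((fderiv ℂ f x).comp
                (ContinuousLinearMap.snd ℂ (Fin 3 → ℂ) (Fin 3 → ℂ))))) (J, x) := by
      intro k
      have hA : HasFDerivAt (fun p : (Fin 3 → ℂ) × (Fin 3 → ℂ) => p.1 k)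
          ((pr k).comp (ContinuousLinearMap.fst ℂ (Fin 3 → ℂ) (Fin 3 → ℂ))) (J, x) :=
        ((pr k).comp (ContinuousLinearMap.fst ℂ (Fin 3 → ℂ) (Fin 3 → ℂ))).hasFDerivAt
      have hB : HasFDerivAt (fun p : (Fin 3 → ℂ) × (Fin 3 → ℂ) => f p.2)
          ((fderiv ℂ f x).comp (ContinuousLinearMap.snd ℂ (Fin 3 → ℂ) (Fin 3 → ℂ))) (J, x) :=
        hfd.comp (J, x) (ContinuousLinearMap.snd ℂ (Fin 3 → ℂ) (Fin 3 → ℂ)).hasFDerivAt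
      have h := hA.add ((hB.mul (hC k)).const_mul (Complex.I * a))
      have he : (Jtilde a f k) = fun p : (Fin 3 → ℂ) × (Fin 3 → ℂ) =>
          p.1 k + Complex.I * a * (f p.2 * p.2 k) := by
        funext p; simp only [Jtilde]; ring
      rw [he]; exact h
    refine ⟨fun k i => ?_, fun k i => ?_, fun k i => ?_, fun k i => ?_⟩
    · rw [pdJ, (hJt k).fderiv]; simp [pr]
    · rw [pdx, (hJt k).fderiv]; simp [pr]; ring
    · rw [pdJ, (hC k).fderiv]; simp [pr]
    · rw [pdx, (hC k).fderiv]; simp [pr]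

set_option maxHeartbeats 2000000 in
/-- On the zero level set `(x,x) = 0` of the first Casimir, the shift
`J ↦ J̃ = J + i a (x₁x₂x₃)^{-1/3} x` preserves the `e(3,ℂ)` Lie–Poisson bracket relations:
`{J̃_i, J̃_j} = Σ_k ε_{ijk} J̃_k` holds on `(x,x) = 0`, and `{J̃_i, x_j} = Σ_k ε_{ijk} x_k`
holds everywhere, i.e. the shift is an outer automorphism of the representation. -/
theorem shift_is_outer_automorphism
    (a : ℂ) (U : Set (Fin 3 → ℂ)) (hU : IsOpen U)
    (f : (Fin 3 → ℂ) → ℂ) (hf : DifferentiableOn ℂ f U)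
    (hf3 : ∀ x ∈ U, f x ^ 3 * (x 0 * x 1 * x 2) = 1) :
    (∀ (J : Fin 3 → ℂ) (x : Fin 3 → ℂ), x ∈ U →
      x 0 ^ 2 + x 1 ^ 2 + x 2 ^ 2 = 0 →
      ∀ i j : Fin 3,
        e3Bracket (Jtilde a f i) (Jtilde a f j) (J, x) =
          ∑ k : Fin 3, (eps i j k : ℂ) * Jtilde a f k (J, x)) ∧
    (∀ (J : Fin 3 → ℂ) (x : Fin 3 → ℂ), x ∈ U →
      ∀ i j : Fin 3,
        e3Bracket (Jtilde a f i) (fun p => p.2 j) (J, x) =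
          ∑ k : Fin 3, (eps i j k : ℂ) * x k) := by
  constructor
  · intro J x hx hc i j
    obtain ⟨hD, hpJ, hpx, -, -⟩ := shift_key a U hU f hf hf3 x hx J
    simp only [e3Bracket, Jtilde, Fin.sum_univ_three, hpJ, hpx]
    have fin2mk : ∀ h : 2 < 3, (⟨2, h⟩ : Fin 3) = 2 := fun _ => rfl
    have fin1mk : ∀ h : 1 < 3, (⟨1, h⟩ : Fin 3) = 1 := fun _ => rfl
    have fin0mk : ∀ h : 0 < 3, (⟨0, h⟩ : Fin 3) = 0 := fun _ => rfl
    fin_cases i <;> fin_cases j <;>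
      simp only [fin0mk, fin1mk, fin2mk] <;>
      norm_num [Pi.single_apply, Fin.ext_iff, eps] <;> try ring
    · linear_combination (Complex.I * a) * ((x 2 / 3) * (hD 0 + hD 1 + hD 2)
        - (fderiv ℂ f x (Pi.single 2 1)) * hc)
    · linear_combination (-(Complex.I * a)) * ((x 1 / 3) * (hD 0 + hD 1 + hD 2)
        - (fderiv ℂ f x (Pi.single 1 1)) * hc)
    · linear_combination (-(Complex.I * a)) * ((x 2 / 3) * (hD 0 + hD 1 + hD 2)
        - (fderiv ℂ f x (Pi.single 2 1)) * hc)
    · linear_combination (Complex.I * a) * ((x 0 / 3) * (hD 0 + hD 1 + hD 2)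
        - (fderiv ℂ f x (Pi.single 0 1)) * hc)
    · linear_combination (Complex.I * a) * ((x 1 / 3) * (hD 0 + hD 1 + hD 2)
        - (fderiv ℂ f x (Pi.single 1 1)) * hc)
    · linear_combination (-(Complex.I * a)) * ((x 0 / 3) * (hD 0 + hD 1 + hD 2)
        - (fderiv ℂ f x (Pi.single 0 1)) * hc)
  · intro J x hx i j
    obtain ⟨-, hpJ, hpx, hcJ, hcx⟩ := shift_key a U hU f hf hf3 x hx J
    simp only [e3Bracket, Fin.sum_univ_three, hpJ, hpx, hcJ, hcx]
    have fin2mk : ∀ h : 2 < 3, (⟨2, h⟩ : Fin 3) = 2 := fun _ => rfl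
    have fin1mk : ∀ h : 1 < 3, (⟨1, h⟩ : Fin 3) = 1 := fun _ => rfl
    have fin0mk : ∀ h : 0 < 3, (⟨0, h⟩ : Fin 3) = 0 := fun _ => rfl
    fin_cases i <;> fin_cases j <;>
      simp only [fin0mk, fin1mk, fin2mk] <;>
      norm_num [Pi.single_apply, Fin.ext_iff, eps]
end

section
/- Let a ∈ ℂ, let U ⊆ ℂ³ be an open set on which a differentiable function f : U → ℂ satisfies f(x)³·x₁x₂x₃ = 1, and set J̃_k(J,x) = J_k + i·a·f(x)·x_k. Define H̃(J,x) = J̃₁² + J̃₂² + J̃₃² and K̃(J,x) = J̃₁ J̃₂ J̃₃. Then for every (J,x) ∈ ℂ³ × U lying on the zero level set of the first Casimir, x₁² + x₂² + x₃² = 0, the Lie–Poisson bracket of H̃ and K̃ vanishes: {H̃, K̃}(J,x) = 0. That is, the deformation of the spherical top obtained from the shift J ↦ J + i a (x₁x₂x₃)^{-1/3} x is completely integrable on the family of orbits with c₁ = 0. -/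
set_option maxHeartbeats 4000000 in
/-- The deformed spherical top obtained from the shift `J ↦ J + i a (x₁x₂x₃)^{-1/3} x`
is completely integrable on the orbits with `c₁ = 0`: the Lie–Poisson bracket of
`H̃ = J̃₁² + J̃₂² + J̃₃²` and `K̃ = J̃₁J̃₂J̃₃` vanishes on the zero level set
`x₁² + x₂² + x₃² = 0` of the first Casimir. -/
theorem deformed_spherical_top_integrable_c1_zero
    (a : ℂ) (U : Set (Fin 3 → ℂ)) (hU : IsOpen U)
    (f : (Fin 3 → ℂ) → ℂ) (hf : DifferentiableOn ℂ f U)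
    (hf3 : ∀ x ∈ U, f x ^ 3 * (x 0 * x 1 * x 2) = 1) :
    ∀ (J : Fin 3 → ℂ) (x : Fin 3 → ℂ), x ∈ U →
      x 0 ^ 2 + x 1 ^ 2 + x 2 ^ 2 = 0 →
      e3Bracket
        (fun p => Jtilde a f 0 p ^ 2 + Jtilde a f 1 p ^ 2 + Jtilde a f 2 p ^ 2)
        (fun p => Jtilde a f 0 p * Jtilde a f 1 p * Jtilde a f 2 p)
        (J, x) = 0 := by
  intro J x hxU hsum
  have hmem : U ∈ nhds x := hU.mem_nhds hxU
  have hfx : DifferentiableAt ℂ f x := (hf x hxU).differentiableAt hmem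
  have h1 : f x ^ 3 * (x 0 * x 1 * x 2) = 1 := hf3 x hxU
  have hx0 : x 0 ≠ 0 := by intro h; rw [h] at h1; simp at h1
  have hx1 : x 1 ≠ 0 := by intro h; rw [h] at h1; simp at h1
  have hx2 : x 2 ≠ 0 := by intro h; rw [h] at h1; simp at h1
  have hfne : f x ≠ 0 := by intro h; rw [h] at h1; simp at h1
  -- derivative of the defining constraint of `f`
  have hproj : ∀ k : Fin 3, HasFDerivAt (fun y : Fin 3 → ℂ => y k)
      (ContinuousLinearMap.proj (R := ℂ) (φ := fun _ : Fin 3 => ℂ) k) x := fun k =>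
    (ContinuousLinearMap.proj (R := ℂ) (φ := fun _ : Fin 3 => ℂ) k).hasFDerivAt
  have hprod : HasFDerivAt (𝕜 := ℂ) (fun y : Fin 3 → ℂ => y 0 * y 1 * y 2) _ x :=
    ((hproj 0).mul (hproj 1)).mul (hproj 2)
  have hcube : HasFDerivAt (fun y : Fin 3 → ℂ => f y ^ 3)
      ((f x * f x) • fderiv ℂ f x + f x • (f x • fderiv ℂ f x + f x • fderiv ℂ f x)) x := by
    have h := (hfx.hasFDerivAt.mul hfx.hasFDerivAt).mul hfx.hasFDerivAt
    have e : (fun y : Fin 3 → ℂ => f y ^ 3) = fun y => f y * f y * f y := by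
      funext y; ring
    rw [e]; exact h
  have hphi : HasFDerivAt (𝕜 := ℂ) (fun y : Fin 3 → ℂ => f y ^ 3 * (y 0 * y 1 * y 2)) _ x :=
    hcube.mul hprod
  have hconst : fderiv ℂ (fun y : Fin 3 → ℂ => f y ^ 3 * (y 0 * y 1 * y 2)) x = 0 := by
    have heq : (fun y : Fin 3 → ℂ => f y ^ 3 * (y 0 * y 1 * y 2)) =ᶠ[nhds x] fun _ => 1 :=
      Filter.eventuallyEq_of_mem hmem fun y hy => hf3 y hy
    rw [heq.fderiv_eq]
    exact fderiv_const_apply 1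
  have hL0 := hphi.fderiv.symm.trans hconst
  have hne : f x ^ 2 * (x 0 * x 1 * x 2) ≠ 0 :=
    mul_ne_zero (pow_ne_zero _ hfne) (mul_ne_zero (mul_ne_zero hx0 hx1) hx2)
  have hc : ∀ i : Fin 3, fderiv ℂ f x (Pi.single i 1) * x i * 3 = -(f x) := by
    intro i
    have hEi := congrArg (fun L : (Fin 3 → ℂ) →L[ℂ] ℂ => L (Pi.single i 1)) hL0
    simp only [ContinuousLinearMap.add_apply, ContinuousLinearMap.coe_smul', Pi.smul_apply,
      ContinuousLinearMap.comp_apply, ContinuousLinearMap.proj_apply, ContinuousLinearMap.zero_apply,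
      ContinuousLinearMap.coe_fst', ContinuousLinearMap.coe_snd', map_zero, smul_eq_mul] at hEi
    fin_cases i <;> simp only [Fin.zero_eta, Fin.mk_one, Fin.reduceFinMk]
    · simp [Pi.single_apply] at hEi
      refine mul_right_cancel₀ hne ?_
      linear_combination (x 0) * hEi
    · simp [Pi.single_apply] at hEi
      refine mul_right_cancel₀ hne ?_
      linear_combination (x 1) * hEi
    · simp [Pi.single_apply] at hEi
      refine mul_right_cancel₀ hne ?_
      linear_combination (x 2) * hEi
  -- derivatives of the shifted momenta
  have hsnd : HasFDerivAt (fun p : (Fin 3 → ℂ) × (Fin 3 → ℂ) => f p.2)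
      ((fderiv ℂ f x).comp (ContinuousLinearMap.snd ℂ (Fin 3 → ℂ) (Fin 3 → ℂ))) (J, x) :=
    HasFDerivAt.comp (𝕜 := ℂ) (x := ((J, x) : (Fin 3 → ℂ) × (Fin 3 → ℂ)))
      (f := Prod.snd) (g := f) hfx.hasFDerivAt hasFDerivAt_snd
  have hJt : ∀ k : Fin 3, HasFDerivAt (Jtilde a f k)
      ((ContinuousLinearMap.proj k).comp (ContinuousLinearMap.fst ℂ (Fin 3 → ℂ) (Fin 3 → ℂ)) +
       ((Complex.I * a * f x) • ((ContinuousLinearMap.proj k).comp (ContinuousLinearMap.snd ℂ (Fin 3 → ℂ) (Fin 3 → ℂ))) +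
        (x k) • ((Complex.I * a) • ((fderiv ℂ f x).comp (ContinuousLinearMap.snd ℂ (Fin 3 → ℂ) (Fin 3 → ℂ)))))) (J, x) := by
    intro k
    exact (((ContinuousLinearMap.proj k).comp (ContinuousLinearMap.fst ℂ (Fin 3 → ℂ) (Fin 3 → ℂ))).hasFDerivAt).add
      ((hsnd.const_mul _).mul
        (((ContinuousLinearMap.proj k).comp (ContinuousLinearMap.snd ℂ (Fin 3 → ℂ) (Fin 3 → ℂ))).hasFDerivAt))
  have hJt2 : ∀ k : Fin 3, HasFDerivAt (fun p => Jtilde a f k p ^ 2)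
      ((Jtilde a f k (J, x)) • ((ContinuousLinearMap.proj k).comp (ContinuousLinearMap.fst ℂ (Fin 3 → ℂ) (Fin 3 → ℂ)) +
       ((Complex.I * a * f x) • ((ContinuousLinearMap.proj k).comp (ContinuousLinearMap.snd ℂ (Fin 3 → ℂ) (Fin 3 → ℂ))) +
        (x k) • ((Complex.I * a) • ((fderiv ℂ f x).comp (ContinuousLinearMap.snd ℂ (Fin 3 → ℂ) (Fin 3 → ℂ)))))) +
       (Jtilde a f k (J, x)) • ((ContinuousLinearMap.proj k).comp (ContinuousLinearMap.fst ℂ (Fin 3 → ℂ) (Fin 3 → ℂ)) +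
       ((Complex.I * a * f x) • ((ContinuousLinearMap.proj k).comp (ContinuousLinearMap.snd ℂ (Fin 3 → ℂ) (Fin 3 → ℂ))) +
        (x k) • ((Complex.I * a) • ((fderiv ℂ f x).comp (ContinuousLinearMap.snd ℂ (Fin 3 → ℂ) (Fin 3 → ℂ))))))) (J, x) := by
    intro k
    have h := (hJt k).mul (hJt k)
    have e : (fun p => Jtilde a f k p ^ 2) = fun p => Jtilde a f k p * Jtilde a f k p := by
      funext p; ring
    rw [e]; exact h
  have hH : HasFDerivAt (fun p => Jtilde a f 0 p ^ 2 + Jtilde a f 1 p ^ 2 + Jtilde a f 2 p ^ 2) _ (J, x) :=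
    ((hJt2 0).add (hJt2 1)).add (hJt2 2)
  have hK : HasFDerivAt (fun p => Jtilde a f 0 p * Jtilde a f 1 p * Jtilde a f 2 p) _ (J, x) :=
    ((hJt 0).mul (hJt 1)).mul (hJt 2)
  -- the twelve partial derivatives
  have hpdJH : ∀ i : Fin 3, pdJ (fun p => Jtilde a f 0 p ^ 2 + Jtilde a f 1 p ^ 2 + Jtilde a f 2 p ^ 2) (J, x) i
      = 2 * (J i + Complex.I * a * f x * x i) := by
    intro i
    unfold pdJ
    rw [hH.fderiv]
    fin_cases i <;> simp only [Fin.zero_eta, Fin.mk_one, Fin.reduceFinMk] <;>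
      simp [Jtilde, Pi.single_apply, ContinuousLinearMap.add_apply, ContinuousLinearMap.coe_smul', Pi.smul_apply,
      ContinuousLinearMap.comp_apply, ContinuousLinearMap.proj_apply, ContinuousLinearMap.zero_apply,
      ContinuousLinearMap.coe_fst', ContinuousLinearMap.coe_snd', map_zero, smul_eq_mul] <;> try ring
  have hpdxH : ∀ i : Fin 3, pdx (fun p => Jtilde a f 0 p ^ 2 + Jtilde a f 1 p ^ 2 + Jtilde a f 2 p ^ 2) (J, x) i
      = 2 * (J i + Complex.I * a * f x * x i) * (Complex.I * a * f x) +
        Complex.I * a * (fderiv ℂ f x (Pi.single i 1)) * (2 * (J 0 + Complex.I * a * f x * x 0) * x 0 + 2 * (J 1 + Complex.I * a * f x * x 1) * x 1 + 2 * (J 2 + Complex.I * a * f x * x 2) * x 2) := by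
    intro i
    unfold pdx
    rw [hH.fderiv]
    fin_cases i <;> simp only [Fin.zero_eta, Fin.mk_one, Fin.reduceFinMk] <;>
      simp [Jtilde, Pi.single_apply, ContinuousLinearMap.add_apply, ContinuousLinearMap.coe_smul', Pi.smul_apply,
      ContinuousLinearMap.comp_apply, ContinuousLinearMap.proj_apply, ContinuousLinearMap.zero_apply,
      ContinuousLinearMap.coe_fst', ContinuousLinearMap.coe_snd', map_zero, smul_eq_mul] <;> try ring
  have hpdJK0 : pdJ (fun p => Jtilde a f 0 p * Jtilde a f 1 p * Jtilde a f 2 p) (J, x) 0 =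
      ((J 1 + Complex.I * a * f x * x 1) * (J 2 + Complex.I * a * f x * x 2)) := by
    unfold pdJ
    rw [hK.fderiv]
    simp [Jtilde, Pi.single_apply, ContinuousLinearMap.add_apply, ContinuousLinearMap.coe_smul', Pi.smul_apply,
      ContinuousLinearMap.comp_apply, ContinuousLinearMap.proj_apply, ContinuousLinearMap.zero_apply,
      ContinuousLinearMap.coe_fst', ContinuousLinearMap.coe_snd', map_zero, smul_eq_mul]
    try ring
  have hpdJK1 : pdJ (fun p => Jtilde a f 0 p * Jtilde a f 1 p * Jtilde a f 2 p) (J, x) 1 =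
      ((J 0 + Complex.I * a * f x * x 0) * (J 2 + Complex.I * a * f x * x 2)) := by
    unfold pdJ
    rw [hK.fderiv]
    simp [Jtilde, Pi.single_apply, ContinuousLinearMap.add_apply, ContinuousLinearMap.coe_smul', Pi.smul_apply,
      ContinuousLinearMap.comp_apply, ContinuousLinearMap.proj_apply, ContinuousLinearMap.zero_apply,
      ContinuousLinearMap.coe_fst', ContinuousLinearMap.coe_snd', map_zero, smul_eq_mul]
    try ring
  have hpdJK2 : pdJ (fun p => Jtilde a f 0 p * Jtilde a f 1 p * Jtilde a f 2 p) (J, x) 2 =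
      ((J 0 + Complex.I * a * f x * x 0) * (J 1 + Complex.I * a * f x * x 1)) := by
    unfold pdJ
    rw [hK.fderiv]
    simp [Jtilde, Pi.single_apply, ContinuousLinearMap.add_apply, ContinuousLinearMap.coe_smul', Pi.smul_apply,
      ContinuousLinearMap.comp_apply, ContinuousLinearMap.proj_apply, ContinuousLinearMap.zero_apply,
      ContinuousLinearMap.coe_fst', ContinuousLinearMap.coe_snd', map_zero, smul_eq_mul]
    try ring
  have hpdxK0 : pdx (fun p => Jtilde a f 0 p * Jtilde a f 1 p * Jtilde a f 2 p) (J, x) 0 =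
      Complex.I * a * f x * ((J 1 + Complex.I * a * f x * x 1) * (J 2 + Complex.I * a * f x * x 2)) + Complex.I * a * (fderiv ℂ f x (Pi.single 0 1)) * ((J 1 + Complex.I * a * f x * x 1) * (J 2 + Complex.I * a * f x * x 2) * x 0 + (J 0 + Complex.I * a * f x * x 0) * (J 2 + Complex.I * a * f x * x 2) * x 1 + (J 0 + Complex.I * a * f x * x 0) * (J 1 + Complex.I * a * f x * x 1) * x 2) := by
    unfold pdx
    rw [hK.fderiv]
    simp [Jtilde, Pi.single_apply, ContinuousLinearMap.add_apply, ContinuousLinearMap.coe_smul', Pi.smul_apply,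
      ContinuousLinearMap.comp_apply, ContinuousLinearMap.proj_apply, ContinuousLinearMap.zero_apply,
      ContinuousLinearMap.coe_fst', ContinuousLinearMap.coe_snd', map_zero, smul_eq_mul]
    try ring
  have hpdxK1 : pdx (fun p => Jtilde a f 0 p * Jtilde a f 1 p * Jtilde a f 2 p) (J, x) 1 =
      Complex.I * a * f x * ((J 0 + Complex.I * a * f x * x 0) * (J 2 + Complex.I * a * f x * x 2)) + Complex.I * a * (fderiv ℂ f x (Pi.single 1 1)) * ((J 1 + Complex.I * a * f x * x 1) * (J 2 + Complex.I * a * f x * x 2) * x 0 + (J 0 + Complex.I * a * f x * x 0) * (J 2 + Complex.I * a * f x * x 2) * x 1 + (J 0 + Complex.I * a * f x * x 0) * (J 1 + Complex.I * a * f x * x 1) * x 2) := by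
    unfold pdx
    rw [hK.fderiv]
    simp [Jtilde, Pi.single_apply, ContinuousLinearMap.add_apply, ContinuousLinearMap.coe_smul', Pi.smul_apply,
      ContinuousLinearMap.comp_apply, ContinuousLinearMap.proj_apply, ContinuousLinearMap.zero_apply,
      ContinuousLinearMap.coe_fst', ContinuousLinearMap.coe_snd', map_zero, smul_eq_mul]
    try ring
  have hpdxK2 : pdx (fun p => Jtilde a f 0 p * Jtilde a f 1 p * Jtilde a f 2 p) (J, x) 2 =
      Complex.I * a * f x * ((J 0 + Complex.I * a * f x * x 0) * (J 1 + Complex.I * a * f x * x 1)) + Complex.I * a * (fderiv ℂ f x (Pi.single 2 1)) * ((J 1 + Complex.I * a * f x * x 1) * (J 2 + Complex.I * a * f x * x 2) * x 0 + (J 0 + Complex.I * a * f x * x 0) * (J 2 + Complex.I * a * f x * x 2) * x 1 + (J 0 + Complex.I * a * f x * x 0) * (J 1 + Complex.I * a * f x * x 1) * x 2) := by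
    unfold pdx
    rw [hK.fderiv]
    simp [Jtilde, Pi.single_apply, ContinuousLinearMap.add_apply, ContinuousLinearMap.coe_smul', Pi.smul_apply,
      ContinuousLinearMap.comp_apply, ContinuousLinearMap.proj_apply, ContinuousLinearMap.zero_apply,
      ContinuousLinearMap.coe_fst', ContinuousLinearMap.coe_snd', map_zero, smul_eq_mul]
    try ring
  -- assemble the bracket and finish by polynomial arithmetic
  unfold e3Bracket
  simp only [Fin.sum_univ_three, hpdJH, hpdxH, hpdJK0, hpdJK1, hpdJK2, hpdxK0, hpdxK1, hpdxK2,
    (show ((eps 0 0 0 : ℤ) : ℂ) = 0 by rw [show eps 0 0 0 = 0 from rfl]; norm_num),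
    (show ((eps 0 0 1 : ℤ) : ℂ) = 0 by rw [show eps 0 0 1 = 0 from rfl]; norm_num),
    (show ((eps 0 0 2 : ℤ) : ℂ) = 0 by rw [show eps 0 0 2 = 0 from rfl]; norm_num),
    (show ((eps 0 1 0 : ℤ) : ℂ) = 0 by rw [show eps 0 1 0 = 0 from rfl]; norm_num),
    (show ((eps 0 1 1 : ℤ) : ℂ) = 0 by rw [show eps 0 1 1 = 0 from rfl]; norm_num),
    (show ((eps 0 1 2 : ℤ) : ℂ) = 1 by rw [show eps 0 1 2 = 1 from rfl]; norm_num),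
    (show ((eps 0 2 0 : ℤ) : ℂ) = 0 by rw [show eps 0 2 0 = 0 from rfl]; norm_num),
    (show ((eps 0 2 1 : ℤ) : ℂ) = -1 by rw [show eps 0 2 1 = -1 from rfl]; norm_num),
    (show ((eps 0 2 2 : ℤ) : ℂ) = 0 by rw [show eps 0 2 2 = 0 from rfl]; norm_num),
    (show ((eps 1 0 0 : ℤ) : ℂ) = 0 by rw [show eps 1 0 0 = 0 from rfl]; norm_num),
    (show ((eps 1 0 1 : ℤ) : ℂ) = 0 by rw [show eps 1 0 1 = 0 from rfl]; norm_num),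
    (show ((eps 1 0 2 : ℤ) : ℂ) = -1 by rw [show eps 1 0 2 = -1 from rfl]; norm_num),
    (show ((eps 1 1 0 : ℤ) : ℂ) = 0 by rw [show eps 1 1 0 = 0 from rfl]; norm_num),
    (show ((eps 1 1 1 : ℤ) : ℂ) = 0 by rw [show eps 1 1 1 = 0 from rfl]; norm_num),
    (show ((eps 1 1 2 : ℤ) : ℂ) = 0 by rw [show eps 1 1 2 = 0 from rfl]; norm_num),
    (show ((eps 1 2 0 : ℤ) : ℂ) = 1 by rw [show eps 1 2 0 = 1 from rfl]; norm_num),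
    (show ((eps 1 2 1 : ℤ) : ℂ) = 0 by rw [show eps 1 2 1 = 0 from rfl]; norm_num),
    (show ((eps 1 2 2 : ℤ) : ℂ) = 0 by rw [show eps 1 2 2 = 0 from rfl]; norm_num),
    (show ((eps 2 0 0 : ℤ) : ℂ) = 0 by rw [show eps 2 0 0 = 0 from rfl]; norm_num),
    (show ((eps 2 0 1 : ℤ) : ℂ) = 1 by rw [show eps 2 0 1 = 1 from rfl]; norm_num),
    (show ((eps 2 0 2 : ℤ) : ℂ) = 0 by rw [show eps 2 0 2 = 0 from rfl]; norm_num),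
    (show ((eps 2 1 0 : ℤ) : ℂ) = -1 by rw [show eps 2 1 0 = -1 from rfl]; norm_num),
    (show ((eps 2 1 1 : ℤ) : ℂ) = 0 by rw [show eps 2 1 1 = 0 from rfl]; norm_num),
    (show ((eps 2 1 2 : ℤ) : ℂ) = 0 by rw [show eps 2 1 2 = 0 from rfl]; norm_num),
    (show ((eps 2 2 0 : ℤ) : ℂ) = 0 by rw [show eps 2 2 0 = 0 from rfl]; norm_num),
    (show ((eps 2 2 1 : ℤ) : ℂ) = 0 by rw [show eps 2 2 1 = 0 from rfl]; norm_num),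
    (show ((eps 2 2 2 : ℤ) : ℂ) = 0 by rw [show eps 2 2 2 = 0 from rfl]; norm_num)]
  have h9 : (9 : ℂ) * (x 0 * x 1 * x 2) ^ 2 ≠ 0 := by
    refine mul_ne_zero (by norm_num) (pow_ne_zero _ ?_)
    exact mul_ne_zero (mul_ne_zero hx0 hx1) hx2
  refine mul_left_cancel₀ h9 ?_
  linear_combination ((-6) * x 0 * x 1^2 * x 2^2 * J 0 * J 2^2 * a * f x * Complex.I + (6) * x 0 * x 1^2 * x 2^2 * J 0 * J 1^2 * a * f x * Complex.I + (-12) * x 0 * x 1^2 * x 2^3 * J 0 * J 2 * a^2 * f x^2 * Complex.I^2 + (-6) * x 0 * x 1^2 * x 2^4 * J 0 * a^3 * f x^3 * Complex.I^3 + (12) * x 0 * x 1^3 * x 2^2 * J 0 * J 1 * a^2 * f x^2 * Complex.I^2 + (6) * x 0 * x 1^4 * x 2^2 * J 0 * a^3 * f x^3 * Complex.I^3 + (6) * x 0^2 * x 1 * x 2^2 * J 1 * J 2^2 * a * f x * Complex.I + (-6) * x 0^2 * x 1 * x 2^2 * J 0^2 * J 1 * a * f x * Complex.I + (12) * x 0^2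 * x 1 * x 2^3 * J 1 * J 2 * a^2 * f x^2 * Complex.I^2 + (6) * x 0^2 * x 1 * x 2^4 * J 1 * a^3 * f x^3 * Complex.I^3 + (-6) * x 0^2 * x 1^2 * x 2 * J 1^2 * J 2 * a * f x * Complex.I + (6) * x 0^2 * x 1^2 * x 2 * J 0^2 * J 2 * a * f x * Complex.I + (-12) * x 0^2 * x 1^3 * x 2 * J 1 * J 2 * a^2 * f x^2 * Complex.I^2 + (-6) * x 0^2 * x 1^4 * x 2 * J 2 * a^3 * f x^3 * Complex.I^3 + (-12) * x 0^3 * x 1 * x 2^2 * J 0 * J 1 * a^2 * f x^2 * Complex.I^2 + (12) * x 0^3 * x 1^2 * x 2 * J 0 * J 2 * a^2 * f x^2 * Complex.I^2 + (-6) * x 0^4 * x 1 * x 2^2 * J 1 * a^3 * f x^3 * Complex.I^3 + (6) * x 0^4 * x 1^2 * x 2 * J 2 * a^3 * f x^3 * Complex.I^3) * hsum +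
    ((6) * x 0 * x 1^2 * x 2^4 * J 0 * J 2^2 * a * Complex.I + (-6) * x 0 * x 1^2 * x 2^4 * J 0 * J 1^2 * a * Complex.I + (12) * x 0 * x 1^2 * x 2^5 * J 0 * J 2 * a^2 * f x * Complex.I^2 + (6) * x 0 * x 1^2 * x 2^6 * J 0 * a^3 * f x^2 * Complex.I^3 + (-12) * x 0 * x 1^3 * x 2^4 * J 0 * J 1 * a^2 * f x * Complex.I^2 + (6) * x 0 * x 1^4 * x 2^2 * J 0 * J 2^2 * a * Complex.I + (-6) * x 0 * x 1^4 * x 2^2 * J 0 * J 1^2 * a * Complex.I + (12) * x 0 * x 1^4 * x 2^3 * J 0 * J 2 * a^2 * f x * Complex.I^2 + (-12) * x 0 * x 1^5 * x 2^2 * J 0 * J 1 * a^2 * f x * Complex.I^2 + (-6) * x 0 * x 1^6 * x 2^2 * J 0 * a^3 * f x^2 * Complex.I^3 + (-6) * x 0^2 * x 1^2 * x 2^3 * J 1^2 * J 2 * a * Complex.I + (6) * x 0^2 * x 1^2 * x 2^3 * J 0^2 * J 2 * a * Complex.I + (6) * x 0^2 * x 1^2 * x 2^4 * J 2^2 * a^2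 * f x * Complex.I^2 + (-12) * x 0^2 * x 1^2 * x 2^4 * J 1^2 * a^2 * f x * Complex.I^2 + (6) * x 0^2 * x 1^2 * x 2^4 * J 0^2 * a^2 * f x * Complex.I^2 + (12) * x 0^2 * x 1^2 * x 2^5 * J 2 * a^3 * f x^2 * Complex.I^3 + (6) * x 0^2 * x 1^2 * x 2^6 * a^4 * f x^3 * Complex.I^4 + (6) * x 0^2 * x 1^3 * x 2^2 * J 1 * J 2^2 * a * Complex.I + (-6) * x 0^2 * x 1^3 * x 2^2 * J 0^2 * J 1 * a * Complex.I + (-18) * x 0^2 * x 1^3 * x 2^4 * J 1 * a^3 * f x^2 * Complex.I^3 + (12) * x 0^2 * x 1^4 * x 2^2 * J 2^2 * a^2 * f x * Complex.I^2 + (-6) * x 0^2 * x 1^4 * x 2^2 * J 1^2 * a^2 * f x * Complex.I^2 + (-6) * x 0^2 * x 1^4 * x 2^2 * J 0^2 * a^2 * f x * Complex.I^2 + (18) * x 0^2 * x 1^4 * x 2^3 * J 2 * a^3 * f x^2 * Complex.I^3 + (-12) * x 0^2 * x 1^5 * x 2^2 * J 1 * a^3 * f x^2 * Complex.I^3 +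 (-6) * x 0^2 * x 1^6 * x 2^2 * a^4 * f x^3 * Complex.I^4 + (12) * x 0^3 * x 1^2 * x 2^3 * J 0 * J 2 * a^2 * f x * Complex.I^2 + (12) * x 0^3 * x 1^2 * x 2^4 * J 0 * a^3 * f x^2 * Complex.I^3 + (-12) * x 0^3 * x 1^3 * x 2^2 * J 0 * J 1 * a^2 * f x * Complex.I^2 + (-12) * x 0^3 * x 1^4 * x 2^2 * J 0 * a^3 * f x^2 * Complex.I^3 + (6) * x 0^4 * x 1^2 * x 2^3 * J 2 * a^3 * f x^2 * Complex.I^3 + (6) * x 0^4 * x 1^2 * x 2^4 * a^4 * f x^3 * Complex.I^4 + (-6) * x 0^4 * x 1^3 * x 2^2 * J 1 * a^3 * f x^2 * Complex.I^3 + (-6) * x 0^4 * x 1^4 * x 2^2 * a^4 * f x^3 * Complex.I^4) * hc 0 + ((-6) * x 0^2 * x 1 * x 2^4 * J 1 * J 2^2 * a * Complex.I + (6) * x 0^2 * x 1 * x 2^4 * J 0^2 * J 1 * a * Complex.I + (-12) * x 0^2 * x 1 * x 2^5 * J 1 * J 2 * a^2 * f x * Complex.I^2 + (-6) * x 0^2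 * x 1 * x 2^6 * J 1 * a^3 * f x^2 * Complex.I^3 + (-6) * x 0^2 * x 1^2 * x 2^3 * J 1^2 * J 2 * a * Complex.I + (6) * x 0^2 * x 1^2 * x 2^3 * J 0^2 * J 2 * a * Complex.I + (-6) * x 0^2 * x 1^2 * x 2^4 * J 2^2 * a^2 * f x * Complex.I^2 + (-6) * x 0^2 * x 1^2 * x 2^4 * J 1^2 * a^2 * f x * Complex.I^2 + (12) * x 0^2 * x 1^2 * x 2^4 * J 0^2 * a^2 * f x * Complex.I^2 + (-12) * x 0^2 * x 1^2 * x 2^5 * J 2 * a^3 * f x^2 * Complex.I^3 + (-6) * x 0^2 * x 1^2 * x 2^6 * a^4 * f x^3 * Complex.I^4 + (-12) * x 0^2 * x 1^3 * x 2^3 * J 1 * J 2 * a^2 * f x * Complex.I^2 + (-12) * x 0^2 * x 1^3 * x 2^4 * J 1 * a^3 * f x^2 * Complex.I^3 + (-6) * x 0^2 * x 1^4 * x 2^3 * J 2 * a^3 * f x^2 * Complex.I^3 + (-6) * x 0^2 * x 1^4 * x 2^4 * a^4 * f x^3 * Complex.I^4 + (12) * x 0^3 * x 1 * x 2^4 *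 J 0 * J 1 * a^2 * f x * Complex.I^2 + (-6) * x 0^3 * x 1^2 * x 2^2 * J 0 * J 2^2 * a * Complex.I + (6) * x 0^3 * x 1^2 * x 2^2 * J 0 * J 1^2 * a * Complex.I + (18) * x 0^3 * x 1^2 * x 2^4 * J 0 * a^3 * f x^2 * Complex.I^3 + (12) * x 0^3 * x 1^3 * x 2^2 * J 0 * J 1 * a^2 * f x * Complex.I^2 + (6) * x 0^3 * x 1^4 * x 2^2 * J 0 * a^3 * f x^2 * Complex.I^3 + (-6) * x 0^4 * x 1 * x 2^2 * J 1 * J 2^2 * a * Complex.I + (6) * x 0^4 * x 1 * x 2^2 * J 0^2 * J 1 * a * Complex.I + (-12) * x 0^4 * x 1 * x 2^3 * J 1 * J 2 * a^2 * f x * Complex.I^2 + (-12) * x 0^4 * x 1^2 * x 2^2 * J 2^2 * a^2 * f x * Complex.I^2 + (6) * x 0^4 * x 1^2 * x 2^2 * J 1^2 * a^2 * f x * Complex.I^2 + (6) * x 0^4 * x 1^2 * x 2^2 * J 0^2 * a^2 * f x * Complex.I^2 + (-18) * x 0^4 * x 1^2 * x 2^3 * J 2 * a^3 * f x^2 * Complex.I^3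 + (12) * x 0^4 * x 1^3 * x 2^2 * J 1 * a^3 * f x^2 * Complex.I^3 + (6) * x 0^4 * x 1^4 * x 2^2 * a^4 * f x^3 * Complex.I^4 + (12) * x 0^5 * x 1 * x 2^2 * J 0 * J 1 * a^2 * f x * Complex.I^2 + (12) * x 0^5 * x 1^2 * x 2^2 * J 0 * a^3 * f x^2 * Complex.I^3 + (6) * x 0^6 * x 1 * x 2^2 * J 1 * a^3 * f x^2 * Complex.I^3 + (6) * x 0^6 * x 1^2 * x 2^2 * a^4 * f x^3 * Complex.I^4) * hc 1 + ((6) * x 0^2 * x 1^3 * x 2^2 * J 1 * J 2^2 * a * Complex.I + (-6) * x 0^2 * x 1^3 * x 2^2 * J 0^2 * J 1 * a * Complex.I + (12) * x 0^2 * x 1^3 * x 2^3 * J 1 * J 2 * a^2 * f x * Complex.I^2 + (6) * x 0^2 * x 1^3 * x 2^4 * J 1 * a^3 * f x^2 * Complex.I^3 + (6) * x 0^2 * x 1^4 * x 2 * J 1^2 * J 2 * a * Complex.I + (-6) * x 0^2 * x 1^4 * x 2 * J 0^2 * J 2 * a * Complex.I + (6) * x 0^2 * x 1^4 * x 2^2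 * J 2^2 * a^2 * f x * Complex.I^2 + (6) * x 0^2 * x 1^4 * x 2^2 * J 1^2 * a^2 * f x * Complex.I^2 + (-12) * x 0^2 * x 1^4 * x 2^2 * J 0^2 * a^2 * f x * Complex.I^2 + (12) * x 0^2 * x 1^4 * x 2^3 * J 2 * a^3 * f x^2 * Complex.I^3 + (6) * x 0^2 * x 1^4 * x 2^4 * a^4 * f x^3 * Complex.I^4 + (12) * x 0^2 * x 1^5 * x 2 * J 1 * J 2 * a^2 * f x * Complex.I^2 + (12) * x 0^2 * x 1^5 * x 2^2 * J 1 * a^3 * f x^2 * Complex.I^3 + (6) * x 0^2 * x 1^6 * x 2 * J 2 * a^3 * f x^2 * Complex.I^3 + (6) * x 0^2 * x 1^6 * x 2^2 * a^4 * f x^3 * Complex.I^4 + (-6) * x 0^3 * x 1^2 * x 2^2 * J 0 * J 2^2 * a * Complex.I + (6) * x 0^3 * x 1^2 * x 2^2 * J 0 * J 1^2 * a * Complex.I + (-12) * x 0^3 * x 1^2 * x 2^3 * J 0 * J 2 * a^2 * f x * Complex.I^2 + (-6) * x 0^3 * x 1^2 * x 2^4 * J 0 * a^3 * f x^2 * Complex.I^3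 + (-12) * x 0^3 * x 1^4 * x 2 * J 0 * J 2 * a^2 * f x * Complex.I^2 + (-18) * x 0^3 * x 1^4 * x 2^2 * J 0 * a^3 * f x^2 * Complex.I^3 + (6) * x 0^4 * x 1^2 * x 2 * J 1^2 * J 2 * a * Complex.I + (-6) * x 0^4 * x 1^2 * x 2 * J 0^2 * J 2 * a * Complex.I + (-6) * x 0^4 * x 1^2 * x 2^2 * J 2^2 * a^2 * f x * Complex.I^2 + (12) * x 0^4 * x 1^2 * x 2^2 * J 1^2 * a^2 * f x * Complex.I^2 + (-6) * x 0^4 * x 1^2 * x 2^2 * J 0^2 * a^2 * f x * Complex.I^2 + (-12) * x 0^4 * x 1^2 * x 2^3 * J 2 * a^3 * f x^2 * Complex.I^3 + (-6) * x 0^4 * x 1^2 * x 2^4 * a^4 * f x^3 * Complex.I^4 + (12) * x 0^4 * x 1^3 * x 2 * J 1 * J 2 * a^2 * f x * Complex.I^2 + (18) * x 0^4 * x 1^3 * x 2^2 * J 1 * a^3 * f x^2 * Complex.I^3 + (-12) * x 0^5 * x 1^2 * x 2 * J 0 * J 2 * a^2 * f x * Complex.I^2 + (-12) * x 0^5 *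 x 1^2 * x 2^2 * J 0 * a^3 * f x^2 * Complex.I^3 + (-6) * x 0^6 * x 1^2 * x 2 * J 2 * a^3 * f x^2 * Complex.I^3 + (-6) * x 0^6 * x 1^2 * x 2^2 * a^4 * f x^3 * Complex.I^4) * hc 2
end

section
/- Let γ ∈ ℝ, let G ∈ M₃(ℝ) be a constant symmetric matrix (G = Gᵀ), and let F : (α,β) → M₃(ℝ) be a twice differentiable matrix-valued function satisfying Fᵀ(t) F̈(t) + |det F(t)|^{1−γ} G = 0 for all t. Then the vorticity matrix K(t) = Fᵀ(t) Ḟ(t) − Ḟᵀ(t) F(t) is constant in t (its time derivative vanishes identically). -/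
open Matrix

attribute [local instance] Matrix.frobeniusNormedAddCommGroup Matrix.frobeniusNormedSpace

set_option maxHeartbeats 1000000

private noncomputable def mulCLM :
    Matrix (Fin 3) (Fin 3) ℝ →L[ℝ]
      Matrix (Fin 3) (Fin 3) ℝ →L[ℝ] Matrix (Fin 3) (Fin 3) ℝ :=
  LinearMap.toContinuousLinearMap
    { toFun := fun a =>
        LinearMap.toContinuousLinearMap (LinearMap.mul ℝ (Matrix (Fin 3) (Fin 3) ℝ) a)
      map_add' := by
        intro a b
        ext x
        simp [add_mul]
      map_smul' := by
        intro c a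
        ext x
        simp [smul_mul_assoc] }

private lemma mulCLM_apply (a b : Matrix (Fin 3) (Fin 3) ℝ) : mulCLM a b = a * b := rfl

private lemma hasDerivAt_matmul {F G : ℝ → Matrix (Fin 3) (Fin 3) ℝ}
    {F' G' : Matrix (Fin 3) (Fin 3) ℝ} {t : ℝ}
    (hF : HasDerivAt F F' t) (hG : HasDerivAt G G' t) :
    HasDerivAt (fun s => F s * G s) (F' * G t + F t * G') t := by
  letI : NormedRing (Matrix (Fin 3) (Fin 3) ℝ) := Matrix.frobeniusNormedRing
  letI : NormedAlgebra ℝ (Matrix (Fin 3) (Fin 3) ℝ) := Matrix.frobeniusNormedAlgebra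
  exact hF.mul hG

/-- For a twice differentiable curve `F(t)` of 3×3 real matrices satisfying the
gas-cloud equations `Fᵀ F'' + |det F|^{1−γ} G = 0` with a constant symmetric matrix `G`,
the vorticity matrix `K = Fᵀ F' − F'ᵀ F` is a constant of motion: its time
derivative vanishes identically on the interval. -/
theorem vorticity_conserved (γ α β : ℝ) (G : Matrix (Fin 3) (Fin 3) ℝ)
    (hG : G = Gᵀ)
    (F F' F'' : ℝ → Matrix (Fin 3) (Fin 3) ℝ)
    (hF' : ∀ t ∈ Set.Ioo α β, HasDerivAt F (F' t) t)
    (hF'' : ∀ t ∈ Set.Ioo α β, HasDerivAt F' (F'' t) t)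
    (heq : ∀ t ∈ Set.Ioo α β,
      (F t)ᵀ * F'' t + |(F t).det| ^ (1 - γ) • G = 0) :
    ∀ t ∈ Set.Ioo α β,
      HasDerivAt (fun s => (F s)ᵀ * F' s - (F' s)ᵀ * F s)
        (0 : Matrix (Fin 3) (Fin 3) ℝ) t := by
  intro t ht
  set e : Matrix (Fin 3) (Fin 3) ℝ →L[ℝ] Matrix (Fin 3) (Fin 3) ℝ :=
    LinearMap.toContinuousLinearMap
      (Matrix.transposeLinearEquiv (Fin 3) (Fin 3) ℝ ℝ).toLinearMap with he
  have hFt : HasDerivAt (fun s => (F s)ᵀ) (F' t)ᵀ t :=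
    e.hasFDerivAt.comp_hasDerivAt t (hF' t ht)
  have hF't : HasDerivAt (fun s => (F' s)ᵀ) (F'' t)ᵀ t :=
    e.hasFDerivAt.comp_hasDerivAt t (hF'' t ht)
  have h1 : HasDerivAt (fun s => (F s)ᵀ * F' s - (F' s)ᵀ * F s)
      (((F' t)ᵀ * F' t + (F t)ᵀ * F'' t) - ((F'' t)ᵀ * F t + (F' t)ᵀ * F' t)) t :=
    (hasDerivAt_matmul hFt (hF'' t ht)).sub (hasDerivAt_matmul hF't (hF' t ht))
  have hA : (F t)ᵀ * F'' t = -(|(F t).det| ^ (1 - γ) • G) :=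
    eq_neg_of_add_eq_zero_left (heq t ht)
  have hB : (F'' t)ᵀ * F t = (F t)ᵀ * F'' t := by
    have h2 := congrArg Matrix.transpose hA
    rw [Matrix.transpose_mul, Matrix.transpose_neg, Matrix.transpose_smul, ← hG,
      Matrix.transpose_transpose] at h2
    rw [h2, hA]
  have h3 : (((F' t)ᵀ * F' t + (F t)ᵀ * F'' t) - ((F'' t)ᵀ * F t + (F' t)ᵀ * F' t)) = 0 := by
    rw [hB]; abel
  rwa [h3] at h1
end

section
/- Let γ ∈ ℝ and let F : (α,β) → M₃(ℝ) be a twice differentiable matrix-valued function with F(t) invertible for all t, satisfying Fᵀ(t) F̈(t) + |det F(t)|^{1−γ} I = 0 for all t (the case G = I). Then the angular momentum matrix J(t) = F(t) Ḟᵀ(t) − Ḟ(t) Fᵀ(t) is constant in t (its time derivative vanishes identically). -/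
open Matrix

attribute [local instance] Matrix.frobeniusNormedAddCommGroup Matrix.frobeniusNormedSpace

set_option maxHeartbeats 1000000

attribute [local instance] Matrix.frobeniusNormedRing Matrix.frobeniusNormedAlgebra

theorem hasDerivAt_transpose' (F : ℝ → Matrix (Fin 3) (Fin 3) ℝ) (A : Matrix (Fin 3) (Fin 3) ℝ)
    (t : ℝ) (h : HasDerivAt F A t) : HasDerivAt (fun s => (F s)ᵀ) Aᵀ t := by
  have h2 := (((Matrix.transposeLinearEquiv (Fin 3) (Fin 3) ℝ
    ℝ).toLinearMap.toContinuousLinearMap).hasFDerivAt.comp t h.hasFDerivAt).hasDerivAt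
  exact h2.congr_deriv (by ext i j; change (1:ℝ) * A j i = A j i; simp)

/-- For a twice differentiable curve `F(t)` of invertible 3×3 real matrices satisfying
the gas-cloud equations `Fᵀ F̈ + |det F|^{1−γ} I = 0` (the case `G = I`), the angular
momentum matrix `J = F Ḟᵀ − Ḟ Fᵀ` is a constant of motion: its time derivative
vanishes identically on the interval. -/
theorem angular_momentum_conserved (γ α β : ℝ)
    (F F' F'' : ℝ → Matrix (Fin 3) (Fin 3) ℝ)
    (hinv : ∀ t ∈ Set.Ioo α β, IsUnit (F t))
    (hF' : ∀ t ∈ Set.Ioo α β, HasDerivAt F (F' t) t)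
    (hF'' : ∀ t ∈ Set.Ioo α β, HasDerivAt F' (F'' t) t)
    (heq : ∀ t ∈ Set.Ioo α β,
      (F t)ᵀ * F'' t + |(F t).det| ^ (1 - γ) • (1 : Matrix (Fin 3) (Fin 3) ℝ) = 0) :
    ∀ t ∈ Set.Ioo α β,
      HasDerivAt (fun s => F s * (F' s)ᵀ - F' s * (F s)ᵀ)
        (0 : Matrix (Fin 3) (Fin 3) ℝ) t := by
  intro t ht
  set c : ℝ := |(F t).det| ^ (1 - γ) with hc
  have hdet : IsUnit (F t).det := (Matrix.isUnit_iff_isUnit_det _).mp (hinv t ht)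
  have hdetT : IsUnit ((F t)ᵀ).det := by simpa using hdet
  have hFinv : F t * (F t)⁻¹ = 1 := Matrix.mul_nonsing_inv _ hdet
  have hEq : (F t)ᵀ * F'' t = -(c • 1) := eq_neg_of_add_eq_zero_left (heq t ht)
  have h1 : F'' t = -(c • ((F t)⁻¹)ᵀ) := by
    have h2 : ((F t)ᵀ)⁻¹ * ((F t)ᵀ * F'' t) = ((F t)ᵀ)⁻¹ * (-(c • 1)) := by rw [hEq]
    rw [← Matrix.mul_assoc, Matrix.nonsing_inv_mul _ hdetT, Matrix.one_mul] at h2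
    rw [h2, Matrix.transpose_nonsing_inv]
    simp [Matrix.mul_smul, Matrix.mul_neg]
  have key : F t * (F'' t)ᵀ = F'' t * (F t)ᵀ := by
    rw [h1]
    simp [Matrix.transpose_neg, Matrix.transpose_smul, Matrix.mul_smul, Matrix.smul_mul,
      Matrix.mul_neg, Matrix.neg_mul, hFinv, ← Matrix.transpose_mul]
  have hd := ((hF' t ht).mul (hasDerivAt_transpose' _ _ _ (hF'' t ht))).sub
      ((hF'' t ht).mul (hasDerivAt_transpose' _ _ _ (hF' t ht)))
  refine hd.congr_deriv ?_
  rw [key]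
  abel
end

section
/- Let a₁, a₂, a₃ ∈ ℝ, A = diag(a₁,a₂,a₃), and let J, x : ℝ → ℝ³ be differentiable curves satisfying the Neumann equations dJ/dt = x × z and dx/dt = −J × x, where z = −A x and × is the cross product in ℝ³. Define the 3×3 matrices 𝒥(t) with rows [[0, −J₃, J₂], [J₃, 0, −J₁], [−J₂, J₁, 0]] and 𝒳(t) with entries 𝒳_{ij} = x_i x_j. Then for every λ ∈ ℝ with λ ≠ 0, the matrices L(λ,t) = λ A + 𝒥(t) + λ^{-1} 𝒳(t) and M(λ,t) = −λ^{-1} 𝒳(t) satisfy the Lax equation dL/dt = L M − M L. -/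
open Matrix

attribute [local instance] Matrix.frobeniusNormedAddCommGroup Matrix.frobeniusNormedSpace

/-- The cross product in `ℝ³`. -/
def cross (u v : Fin 3 → ℝ) : Fin 3 → ℝ :=
  ![u 1 * v 2 - u 2 * v 1, u 2 * v 0 - u 0 * v 2, u 0 * v 1 - u 1 * v 0]

/-- The antisymmetric matrix of angular momentum for the Neumann system. -/
def Jmat (J : Fin 3 → ℝ) : Matrix (Fin 3) (Fin 3) ℝ :=
  !![0, -J 2, J 1; J 2, 0, -J 0; -J 1, J 0, 0]

/-- The symmetric matrix of coordinates `𝒳_{ij} = x_i x_j` for the Neumann system. -/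
def Xmat (x : Fin 3 → ℝ) : Matrix (Fin 3) (Fin 3) ℝ :=
  Matrix.of fun i j => x i * x j

/-- The Lax matrix `L(λ) = λ diag(a₁,a₂,a₃) + 𝒥 + λ⁻¹ 𝒳` of the Neumann system. -/
noncomputable def LaxL (a : Fin 3 → ℝ) (lam : ℝ) (J x : Fin 3 → ℝ) :
    Matrix (Fin 3) (Fin 3) ℝ :=
  lam • Matrix.diagonal a + Jmat J + lam⁻¹ • Xmat x

/-- The second Lax matrix `M(λ) = −λ⁻¹ 𝒳` of the Neumann system. -/
noncomputable def LaxM (lam : ℝ) (x : Fin 3 → ℝ) : Matrix (Fin 3) (Fin 3) ℝ :=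
  -(lam⁻¹ • Xmat x)

/-- A matrix-valued function has a derivative if each of its entries does. -/
lemma neumann_hasDerivAt_of_entries {m n : ℕ} {f : ℝ → Matrix (Fin m) (Fin n) ℝ}
    {f' : Matrix (Fin m) (Fin n) ℝ} {t : ℝ}
    (h : ∀ i j, HasDerivAt (fun s => f s i j) (f' i j) t) :
    HasDerivAt f f' t := by
  have key : HasDerivAt (fun s => ∑ i : Fin m, ∑ j : Fin n, f s i j • single i j (1:ℝ))
      (∑ i : Fin m, ∑ j : Fin n, f' i j • single i j (1:ℝ)) t :=
    HasDerivAt.fun_sum fun i _ => HasDerivAt.fun_sum fun j _ => (h i j).smul_const _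
  have e1 : ∀ (M : Matrix (Fin m) (Fin n) ℝ),
      M = ∑ i : Fin m, ∑ j : Fin n, M i j • single i j (1:ℝ) := by
    intro M
    ext i' j'
    simp [Matrix.sum_apply, single, Matrix.of_apply, smul_eq_mul, mul_ite,
      Finset.sum_ite_eq, Finset.sum_ite_eq', ite_and]
  have hf : f = fun s => ∑ i : Fin m, ∑ j : Fin n, f s i j • single i j (1:ℝ) := by
    funext s; exact e1 (f s)
  rw [hf, e1 f']
  exact key

/-- The algebraic core of the Lax representation: the entrywise identity. -/
lemma neumann_lax_entry (a J x : Fin 3 → ℝ) (lam : ℝ) (hlam : lam ≠ 0)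
    (L M : Matrix (Fin 3) (Fin 3) ℝ)
    (hL : ∀ i j, L i j = lam * Matrix.diagonal a i j + Jmat J i j + lam⁻¹ * (x i * x j))
    (hM : ∀ i j, M i j = -(lam⁻¹ * (x i * x j))) :
    ∀ i j, Jmat (cross x (fun i => -(a i) * x i)) i j
      + lam⁻¹ * ((-(cross J x)) i * x j + x i * (-(cross J x)) j)
      = (L * M - M * L) i j := by
  intro i j
  have hmu : lam * lam⁻¹ = 1 := mul_inv_cancel₀ hlam
  simp only [Matrix.sub_apply, Matrix.mul_apply, Fin.sum_univ_three, hL, hM]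
  fin_cases i <;> fin_cases j <;>
    simp only [Jmat, cross, Matrix.diagonal_apply, Pi.neg_apply, Matrix.cons_val',
      Matrix.cons_val_zero, Matrix.cons_val_one, Matrix.head_cons, Matrix.head_fin_const,
      Matrix.cons_val_fin_one, Matrix.empty_val', Matrix.of_apply, Fin.isValue,
      Matrix.cons_val_two, Matrix.tail_cons, Fin.mk_one, Fin.mk_zero,
      if_true, if_false, Fin.ext_iff, Fin.val_zero, Fin.val_one, Fin.val_two,
      Fin.reduceFinMk] <;>
    norm_num <;>
    first
      | ring1
      | linear_combination ((a 0 - a 1) * x 0 * x 1) * hmu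
      | linear_combination ((a 1 - a 0) * x 0 * x 1) * hmu
      | linear_combination ((a 0 - a 2) * x 0 * x 2) * hmu
      | linear_combination ((a 2 - a 0) * x 0 * x 2) * hmu
      | linear_combination ((a 1 - a 2) * x 1 * x 2) * hmu
      | linear_combination ((a 2 - a 1) * x 1 * x 2) * hmu

/-- The Neumann equations `dJ/dt = x × z`, `dx/dt = −J × x` with `z = −diag(a₁,a₂,a₃)x`
are equivalent to the Lax equation `dL/dt = [L, M] = LM − ML` for every `λ ≠ 0`. -/
theorem neumann_lax_representation (a : Fin 3 → ℝ)
    (J x : ℝ → Fin 3 → ℝ)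
    (hJ : ∀ t, HasDerivAt J (cross (x t) (fun i => -(a i) * x t i)) t)
    (hx : ∀ t, HasDerivAt x (-(cross (J t) (x t))) t) :
    ∀ lam : ℝ, lam ≠ 0 → ∀ t : ℝ,
      HasDerivAt (fun s => LaxL a lam (J s) (x s))
        (LaxL a lam (J t) (x t) * LaxM lam (x t) -
          LaxM lam (x t) * LaxL a lam (J t) (x t)) t := by
  intro lam hlam t
  have hJc : ∀ i, HasDerivAt (fun s => J s i)
      (cross (x t) (fun i => -(a i) * x t i) i) t := fun i =>
    hasDerivAt_pi.mp (hJ t) i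
  have hxc : ∀ i, HasDerivAt (fun s => x s i) ((-(cross (J t) (x t))) i) t := fun i =>
    hasDerivAt_pi.mp (hx t) i
  apply neumann_hasDerivAt_of_entries
  intro i j
  have hJm : HasDerivAt (fun s => Jmat (J s) i j)
      (Jmat (cross (x t) (fun i => -(a i) * x t i)) i j) t := by
    fin_cases i <;> fin_cases j <;> simp [Jmat] <;>
      first
        | exact hasDerivAt_const _ _
        | simpa [cross] using hJc 0
        | simpa [cross] using hJc 1
        | simpa [cross] using hJc 2
        | simpa [cross, Pi.neg_def] using (hJc 0).neg
        | simpa [cross, Pi.neg_def] using (hJc 1).neg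
        | simpa [cross, Pi.neg_def] using (hJc 2).neg
  have h1 : HasDerivAt (fun s => LaxL a lam (J s) (x s) i j)
      (Jmat (cross (x t) (fun i => -(a i) * x t i)) i j
        + lam⁻¹ * ((-(cross (J t) (x t))) i * x t j + x t i * (-(cross (J t) (x t))) j)) t := by
    have h2 := hJm.add (((hxc i).mul (hxc j)).const_mul lam⁻¹)
    have h3 := h2.const_add (lam * Matrix.diagonal a i j)
    simp only [LaxL, Matrix.add_apply, Matrix.smul_apply, Xmat, Matrix.of_apply,
      smul_eq_mul] at h3 ⊢
    refine h3.congr_of_eventuallyEq (Filter.Eventually.of_forall fun s => ?_)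
    simp only [Pi.add_apply, Pi.mul_apply]; ring
  have key := neumann_lax_entry a (J t) (x t) lam hlam
    (LaxL a lam (J t) (x t)) (LaxM lam (x t))
    (fun i j => by simp [LaxL, Xmat]) (fun i j => by simp [LaxM, Xmat]) i j
  exact key ▸ h1
end

section
/- Let a ∈ ℝ and let J, y : ℝ → ℝ³ be differentiable curves with y₁(u) y₂(u) y₃(u) = 1 for all u, satisfying dJ/du = (a²/2)(y × y⁻¹) and dy/du = −(1/2)(J × y⁻¹), where y⁻¹ = (1/y₁, 1/y₂, 1/y₃). Then the second integral of motion K(u) = J₁(u) J₂(u) J₃(u) + a² ( J₁(u)/y₁(u) + J₂(u)/y₂(u) + J₃(u)/y₃(u) ) is constant in u. -/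
/-- Along the flow `dJ/du = (a²/2)(y × y⁻¹)`, `dy/du = −(1/2)(J × y⁻¹)` of the
deformed spherical top with `y₁y₂y₃ = 1`, the second integral of motion
`K = J₁J₂J₃ + a²(J₁/y₁ + J₂/y₂ + J₃/y₃)` is constant in `u`. -/
theorem deformed_top_second_integral_conserved (a : ℝ)
    (J y : ℝ → Fin 3 → ℝ)
    (hy1 : ∀ u, y u 0 * y u 1 * y u 2 = 1)
    (hJ : ∀ u, HasDerivAt J ((a ^ 2 / 2) • cross (y u) (fun i => (y u i)⁻¹)) u)
    (hy : ∀ u, HasDerivAt y (-((1 : ℝ) / 2) • cross (J u) (fun i => (y u i)⁻¹)) u) :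
    ∀ u₁ u₂ : ℝ,
      J u₁ 0 * J u₁ 1 * J u₁ 2
          + a ^ 2 * (J u₁ 0 / y u₁ 0 + J u₁ 1 / y u₁ 1 + J u₁ 2 / y u₁ 2) =
        J u₂ 0 * J u₂ 1 * J u₂ 2
          + a ^ 2 * (J u₂ 0 / y u₂ 0 + J u₂ 1 / y u₂ 1 + J u₂ 2 / y u₂ 2) := by
  have hne : ∀ u, y u 0 ≠ 0 ∧ y u 1 ≠ 0 ∧ y u 2 ≠ 0 := by
    intro u
    have h := hy1 u
    refine ⟨?_, ?_, ?_⟩ <;> intro h0 <;> rw [h0] at h <;> simp at h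
  set K : ℝ → ℝ := fun u =>
    J u 0 * J u 1 * J u 2
      + a ^ 2 * (J u 0 / y u 0 + J u 1 / y u 1 + J u 2 / y u 2) with hK
  have hKderiv : ∀ u, HasDerivAt K 0 u := by
    intro u
    obtain ⟨h0, h1, h2⟩ := hne u
    have hJi := hasDerivAt_pi.mp (hJ u)
    have hyi := hasDerivAt_pi.mp (hy u)
    have h := (((hJi 0).mul (hJi 1)).mul (hJi 2)).add
      ((((hJi 0).div (hyi 0) h0).add ((hJi 1).div (hyi 1) h1)).add
        ((hJi 2).div (hyi 2) h2) |>.const_mul (a ^ 2))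
    have key : (0:ℝ) =
        (((a ^ 2 / 2) • cross (y u) fun i => (y u i)⁻¹) 0 * J u 1 +
              J u 0 * ((a ^ 2 / 2) • cross (y u) fun i => (y u i)⁻¹) 1) *
            J u 2 +
          J u 0 * J u 1 * ((a ^ 2 / 2) • cross (y u) fun i => (y u i)⁻¹) 2 +
        a ^ 2 *
          ((((a ^ 2 / 2) • cross (y u) fun i => (y u i)⁻¹) 0 * y u 0 -
                  J u 0 * (-(1 / 2 : ℝ) • cross (J u) fun i => (y u i)⁻¹) 0) /
                y u 0 ^ 2 +
              (((a ^ 2 / 2) • cross (y u) fun i => (y u i)⁻¹) 1 * y u 1 -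
                  J u 1 * (-(1 / 2 : ℝ) • cross (J u) fun i => (y u i)⁻¹) 1) /
                y u 1 ^ 2 +
            (((a ^ 2 / 2) • cross (y u) fun i => (y u i)⁻¹) 2 * y u 2 -
                J u 2 * (-(1 / 2 : ℝ) • cross (J u) fun i => (y u i)⁻¹) 2) /
              y u 2 ^ 2) := by
      have i0 : (y u 0)⁻¹ = y u 1 * y u 2 := by
        field_simp; linear_combination -hy1 u
      have i1 : (y u 1)⁻¹ = y u 0 * y u 2 := by
        field_simp; linear_combination -hy1 u
      have i2 : (y u 2)⁻¹ = y u 0 * y u 1 := by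
        field_simp; linear_combination -hy1 u
      simp only [cross, Pi.smul_apply, smul_eq_mul, Matrix.cons_val_zero, Matrix.cons_val_one,
        Matrix.head_cons, Matrix.cons_val_two, Matrix.tail_cons, div_eq_mul_inv, ← inv_pow,
        i0, i1, i2]
      linear_combination ((1/2:ℝ) * y u 1 * y u 2^2 * J u 0 * J u 2 * a^2
        + (-1/2:ℝ) * y u 1^2 * y u 2 * J u 0 * J u 1 * a^2
        + (-1/2:ℝ) * y u 0 * y u 2^2 * J u 1 * J u 2 * a^2
        + (1/2:ℝ) * y u 0 * y u 1^2 * J u 1 * J u 2 * a^2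
        + (1/2:ℝ) * y u 0^2 * y u 2 * J u 0 * J u 1 * a^2
        + (-1/2:ℝ) * y u 0^2 * y u 1 * J u 0 * J u 2 * a^2) * hy1 u
    exact key ▸ h
  have hconst := is_const_of_deriv_eq_zero (fun u => (hKderiv u).differentiableAt)
    (fun u => (hKderiv u).deriv)
  intro u₁ u₂
  exact hconst u₁ u₂
end

section
/- Let a ∈ ℝ and let J, y : ℝ → ℝ³ be differentiable curves with y₁(u), y₂(u), y₃(u) ≠ 0 for all u, satisfying dJ/du = (a²/2)(y × y⁻¹) and dy/du = −(1/2)(J × y⁻¹), where y⁻¹ = (1/y₁, 1/y₂, 1/y₃). Then the product y₁(u) y₂(u) y₃(u) is constant in u. In particular, the constraint y₁y₂y₃ = 1 defining the natural variables is preserved by the flow. -/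
/-- Along the flow `dJ/du = (a²/2)(y × y⁻¹)`, `dy/du = −(1/2)(J × y⁻¹)` of the
deformed spherical top (with `y₁,y₂,y₃ ≠ 0`), the product `y₁y₂y₃` is constant in `u`;
in particular the constraint `y₁y₂y₃ = 1` defining the natural variables is preserved
by the flow. -/
theorem deformed_top_product_conserved (a : ℝ)
    (J y : ℝ → Fin 3 → ℝ)
    (hy0 : ∀ u, y u 0 ≠ 0 ∧ y u 1 ≠ 0 ∧ y u 2 ≠ 0)
    (hJ : ∀ u, HasDerivAt J ((a ^ 2 / 2) • cross (y u) (fun i => (y u i)⁻¹)) u)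
    (hy : ∀ u, HasDerivAt y (-((1 : ℝ) / 2) • cross (J u) (fun i => (y u i)⁻¹)) u) :
    ∀ u₁ u₂ : ℝ, y u₁ 0 * y u₁ 1 * y u₁ 2 = y u₂ 0 * y u₂ 1 * y u₂ 2 := by
  have key : ∀ u : ℝ, HasDerivAt (fun u => y u 0 * y u 1 * y u 2) 0 u := by
    intro u
    have h0 := (hasDerivAt_pi.mp (hy u)) 0
    have h1 := (hasDerivAt_pi.mp (hy u)) 1
    have h2 := (hasDerivAt_pi.mp (hy u)) 2
    have : HasDerivAt (fun u => y u 0 * y u 1 * y u 2) _ u := ((h0.fun_mul h1).fun_mul h2)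
    convert this using 1
    obtain ⟨n0, n1, n2⟩ := hy0 u
    simp only [Pi.smul_apply, cross, Matrix.cons_val_zero, Matrix.cons_val_one,
      Matrix.head_cons, Matrix.cons_val_two, Matrix.tail_cons, smul_eq_mul]
    field_simp
    ring
  intro u₁ u₂
  have : ∀ u, (fun u => y u 0 * y u 1 * y u 2) u = (fun u => y u 0 * y u 1 * y u 2) u₁ := by
    intro u
    exact (is_const_of_deriv_eq_zero (fun v => (key v).differentiableAt)
      (fun v => (key v).deriv) u u₁)
  exact (this u₁).trans (this u₂).symm
end

section
/- Let a ∈ ℝ and let J, y : ℝ → ℝ³ be differentiable curves with y₁(u), y₂(u), y₃(u) ≠ 0 for all u, satisfying dJ/du = (a²/2)(y × y⁻¹) and dy/du = −(1/2)(J × y⁻¹), where y⁻¹ = (1/y₁, 1/y₂, 1/y₃). Then the quantity (J, y)(u) = J₁(u) y₁(u) + J₂(u) y₂(u) + J₃(u) y₃(u) is constant in u. In particular, the Casimir-type constraint (J,y) = 0 (the orbit c₂ = 0) is preserved by the flow. -/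
/-- Along the flow `dJ/du = (a²/2)(y × y⁻¹)`, `dy/du = −(1/2)(J × y⁻¹)` of the
deformed spherical top (with `y₁,y₂,y₃ ≠ 0`), the quantity
`(J,y) = J₁y₁ + J₂y₂ + J₃y₃` is constant in `u`; in particular the Casimir-type
constraint `(J,y) = 0` (the orbit `c₂ = 0`) is preserved by the flow. -/
theorem deformed_top_casimir_conserved (a : ℝ)
    (J y : ℝ → Fin 3 → ℝ)
    (hy0 : ∀ u, y u 0 ≠ 0 ∧ y u 1 ≠ 0 ∧ y u 2 ≠ 0)
    (hJ : ∀ u, HasDerivAt J ((a ^ 2 / 2) • cross (y u) (fun i => (y u i)⁻¹)) u)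
    (hy : ∀ u, HasDerivAt y (-((1 : ℝ) / 2) • cross (J u) (fun i => (y u i)⁻¹)) u) :
    ∀ u₁ u₂ : ℝ,
      J u₁ 0 * y u₁ 0 + J u₁ 1 * y u₁ 1 + J u₁ 2 * y u₁ 2 =
        J u₂ 0 * y u₂ 0 + J u₂ 1 * y u₂ 1 + J u₂ 2 * y u₂ 2 := by
  set f : ℝ → ℝ := fun u => J u 0 * y u 0 + J u 1 * y u 1 + J u 2 * y u 2 with hf
  have key : ∀ u, HasDerivAt f 0 u := by
    intro u
    obtain ⟨h1, h2, h3⟩ := hy0 u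
    have hJi := (hasDerivAt_pi.mp (hJ u))
    have hyi := (hasDerivAt_pi.mp (hy u))
    have := (((hJi 0).mul (hyi 0)).add ((hJi 1).mul (hyi 1))).add
      ((hJi 2).mul (hyi 2))
    convert this using 1
    · rfl
    · rfl
    · rfl
    simp only [cross, Pi.smul_apply, Matrix.cons_val_zero, Matrix.cons_val_one,
      Matrix.head_cons, Matrix.cons_val_two, Matrix.tail_cons, smul_eq_mul]
    field_simp
    ring
  exact fun u₁ u₂ =>
    is_const_of_deriv_eq_zero (fun u => (key u).differentiableAt)
      (fun u => (key u).deriv) u₁ u₂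
end

section
/- Let a ∈ ℝ and let J, y : ℝ → ℝ³ be differentiable curves with y₁(u) y₂(u) y₃(u) = 1 for all u, satisfying dJ/du = (a²/2)(y × y⁻¹) and dy/du = −(1/2)(J × y⁻¹), where y⁻¹ = (1/y₁, 1/y₂, 1/y₃). Define the Flaschka-type variables s₁ = y₁⁻², s₂ = y₃⁻², s₃ = y₂⁻², s₄ = y₃ J₃, s₅ = y₂ J₂, s₆ = y₁ J₁. Then these satisfy the Toda-like system ds₁/du = s₁(s₅ − s₄), ds₂/du = s₂(s₆ − s₅), ds₃/du = s₃(s₄ − s₆), ds₄/du = (a²/2)(s₃ − s₁) + (s₄/2)(s₅ − s₆), ds₅/du = (a²/2)(s₁ − s₂) + (s₅/2)(s₆ − s₄), ds₆/du = (a²/2)(s₂ − s₃) + (s₆/2)(s₄ − s₅). In particular the equations for s₁, s₂, s₃ coincide exactly with the corresponding equations of the three-body Toda lattice in Flaschka variables, and the equations for s₄, s₅, s₆ differ from Toda's only by at most quadratic polynomial terms. -/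
/-- In the Flaschka-type variables `s₁ = y₁⁻²`, `s₂ = y₃⁻²`, `s₃ = y₂⁻²`,
`s₄ = y₃J₃`, `s₅ = y₂J₂`, `s₆ = y₁J₁`, the flow `dJ/du = (a²/2)(y × y⁻¹)`,
`dy/du = −(1/2)(J × y⁻¹)` of the deformed spherical top (with `y₁y₂y₃ = 1`)
becomes the Toda-like system
`ds₁/du = s₁(s₅ − s₄)`, `ds₂/du = s₂(s₆ − s₅)`, `ds₃/du = s₃(s₄ − s₆)`,
`ds₄/du = (a²/2)(s₃ − s₁) + (s₄/2)(s₅ − s₆)`,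
`ds₅/du = (a²/2)(s₁ − s₂) + (s₅/2)(s₆ − s₄)`,
`ds₆/du = (a²/2)(s₂ − s₃) + (s₆/2)(s₄ − s₅)`. -/
theorem deformed_top_flaschka_variables (a : ℝ)
    (J y : ℝ → Fin 3 → ℝ)
    (hy1 : ∀ u, y u 0 * y u 1 * y u 2 = 1)
    (hJ : ∀ u, HasDerivAt J ((a ^ 2 / 2) • cross (y u) (fun i => (y u i)⁻¹)) u)
    (hy : ∀ u, HasDerivAt y (-((1 : ℝ) / 2) • cross (J u) (fun i => (y u i)⁻¹)) u) :
    ∀ u : ℝ,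
      (HasDerivAt (fun u => (y u 0 ^ 2)⁻¹)
        ((y u 0 ^ 2)⁻¹ * (y u 1 * J u 1 - y u 2 * J u 2)) u) ∧
      (HasDerivAt (fun u => (y u 2 ^ 2)⁻¹)
        ((y u 2 ^ 2)⁻¹ * (y u 0 * J u 0 - y u 1 * J u 1)) u) ∧
      (HasDerivAt (fun u => (y u 1 ^ 2)⁻¹)
        ((y u 1 ^ 2)⁻¹ * (y u 2 * J u 2 - y u 0 * J u 0)) u) ∧
      (HasDerivAt (fun u => y u 2 * J u 2)
        (a ^ 2 / 2 * ((y u 1 ^ 2)⁻¹ - (y u 0 ^ 2)⁻¹)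
          + y u 2 * J u 2 / 2 * (y u 1 * J u 1 - y u 0 * J u 0)) u) ∧
      (HasDerivAt (fun u => y u 1 * J u 1)
        (a ^ 2 / 2 * ((y u 0 ^ 2)⁻¹ - (y u 2 ^ 2)⁻¹)
          + y u 1 * J u 1 / 2 * (y u 0 * J u 0 - y u 2 * J u 2)) u) ∧
      (HasDerivAt (fun u => y u 0 * J u 0)
        (a ^ 2 / 2 * ((y u 2 ^ 2)⁻¹ - (y u 1 ^ 2)⁻¹)
          + y u 0 * J u 0 / 2 * (y u 2 * J u 2 - y u 1 * J u 1)) u) := by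
  intro u
  have h0 : y u 0 ≠ 0 := by intro h; have := hy1 u; rw [h] at this; simp at this
  have h1 : y u 1 ≠ 0 := by intro h; have := hy1 u; rw [h] at this; simp at this
  have h2 : y u 2 ≠ 0 := by intro h; have := hy1 u; rw [h] at this; simp at this
  have hy0 := hasDerivAt_pi.1 (hy u) 0
  have hy1' := hasDerivAt_pi.1 (hy u) 1
  have hy2 := hasDerivAt_pi.1 (hy u) 2
  have hJ0 := hasDerivAt_pi.1 (hJ u) 0
  have hJ1 := hasDerivAt_pi.1 (hJ u) 1
  have hJ2 := hasDerivAt_pi.1 (hJ u) 2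
  simp only [cross, Pi.smul_apply, smul_eq_mul, Matrix.cons_val_zero, Matrix.cons_val_one,
    Matrix.head_cons, Matrix.cons_val_two, Matrix.tail_cons] at hy0 hy1' hy2 hJ0 hJ1 hJ2
  refine ⟨?_, ?_, ?_, ?_, ?_, ?_⟩
  · refine ((hy0.fun_pow 2).fun_inv (pow_ne_zero 2 h0)).congr_deriv (Eq.symm ?_)
    field_simp
    linear_combination (2 * y u 0 * y u 1 * J u 1 - 2 * y u 0 * y u 2 * J u 2) * hy1 u
  · refine ((hy2.fun_pow 2).fun_inv (pow_ne_zero 2 h2)).congr_deriv (Eq.symm ?_)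
    field_simp
    linear_combination (2 * y u 0 * y u 2 * J u 0 - 2 * y u 1 * y u 2 * J u 1) * hy1 u
  · refine ((hy1'.fun_pow 2).fun_inv (pow_ne_zero 2 h1)).congr_deriv (Eq.symm ?_)
    field_simp
    linear_combination (2 * y u 1 * y u 2 * J u 2 - 2 * y u 0 * y u 1 * J u 0) * hy1 u
  · refine (hy2.fun_mul hJ2).congr_deriv (Eq.symm ?_)
    field_simp
    linear_combination (y u 0 * y u 1 ^ 2 * J u 1 * J u 2 - y u 0 ^ 2 * y u 1 * J u 0 * J u 2 + a ^ 2 * y u 1 ^ 2 - a ^ 2 * y u 0 ^ 2) * hy1 u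
  · refine (hy1'.fun_mul hJ1).congr_deriv (Eq.symm ?_)
    field_simp
    linear_combination (-(y u 0 * y u 2 ^ 2 * J u 1 * J u 2) + y u 0 ^ 2 * y u 2 * J u 0 * J u 1 - a ^ 2 * y u 2 ^ 2 + a ^ 2 * y u 0 ^ 2) * hy1 u
  · refine (hy0.fun_mul hJ0).congr_deriv (Eq.symm ?_)
    field_simp
    linear_combination (y u 1 * y u 2 ^ 2 * J u 0 * J u 2 - y u 1 ^ 2 * y u 2 * J u 0 * J u 1 + a ^ 2 * y u 2 ^ 2 - a ^ 2 * y u 1 ^ 2) * hy1 u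
end

section
/- Let a ∈ ℝ and let s : ℝ → ℝ⁶ be a differentiable curve satisfying the Toda-like system ds₁/du = s₁(s₅ − s₄), ds₂/du = s₂(s₆ − s₅), ds₃/du = s₃(s₄ − s₆), ds₄/du = (a²/2)(s₃ − s₁) + (s₄/2)(s₅ − s₆), ds₅/du = (a²/2)(s₁ − s₂) + (s₅/2)(s₆ − s₄), ds₆/du = (a²/2)(s₂ − s₃) + (s₆/2)(s₄ − s₅). Then each of the four quantities S₁ = s₁ s₂ s₃, S₂ = s₄ + s₅ + s₆, S₃ = s₄² s₂ + s₅² s₃ + s₆² s₁ − a² (s₁ s₂ + s₁ s₃ + s₂ s₃), S₄ = s₄ s₅ s₆ + a² (s₁ s₆ + s₂ s₄ + s₃ s₅) is constant along the flow. -/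
private lemma const_of_hasDerivAt_zero {F : ℝ → ℝ} (h : ∀ u, HasDerivAt F 0 u)
    (u₁ u₂ : ℝ) : F u₁ = F u₂ :=
  is_const_of_deriv_eq_zero (fun u => (h u).differentiableAt) (fun u => (h u).deriv) u₁ u₂
/-- Along the Toda-like flow of the deformed spherical top in Flaschka-type variables,
`ds₁/du = s₁(s₅ − s₄)`, `ds₂/du = s₂(s₆ − s₅)`, `ds₃/du = s₃(s₄ − s₆)`,
`ds₄/du = (a²/2)(s₃ − s₁) + (s₄/2)(s₅ − s₆)`,
`ds₅/du = (a²/2)(s₁ − s₂) + (s₅/2)(s₆ − s₄)`,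
`ds₆/du = (a²/2)(s₂ − s₃) + (s₆/2)(s₄ − s₅)`,
each of the four quantities `S₁ = s₁s₂s₃`, `S₂ = s₄ + s₅ + s₆`,
`S₃ = s₄²s₂ + s₅²s₃ + s₆²s₁ − a²(s₁s₂ + s₁s₃ + s₂s₃)`,
`S₄ = s₄s₅s₆ + a²(s₁s₆ + s₂s₄ + s₃s₅)` is constant along the flow. -/
theorem toda_like_flow_invariants (a : ℝ)
    (s : ℝ → Fin 6 → ℝ)
    (hs : ∀ u, HasDerivAt s
      ![s u 0 * (s u 4 - s u 3),
        s u 1 * (s u 5 - s u 4),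
        s u 2 * (s u 3 - s u 5),
        a ^ 2 / 2 * (s u 2 - s u 0) + s u 3 / 2 * (s u 4 - s u 5),
        a ^ 2 / 2 * (s u 0 - s u 1) + s u 4 / 2 * (s u 5 - s u 3),
        a ^ 2 / 2 * (s u 1 - s u 2) + s u 5 / 2 * (s u 3 - s u 4)] u) :
    ∀ u₁ u₂ : ℝ,
      (s u₁ 0 * s u₁ 1 * s u₁ 2 = s u₂ 0 * s u₂ 1 * s u₂ 2) ∧
      (s u₁ 3 + s u₁ 4 + s u₁ 5 = s u₂ 3 + s u₂ 4 + s u₂ 5) ∧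
      (s u₁ 3 ^ 2 * s u₁ 1 + s u₁ 4 ^ 2 * s u₁ 2 + s u₁ 5 ^ 2 * s u₁ 0
          - a ^ 2 * (s u₁ 0 * s u₁ 1 + s u₁ 0 * s u₁ 2 + s u₁ 1 * s u₁ 2) =
        s u₂ 3 ^ 2 * s u₂ 1 + s u₂ 4 ^ 2 * s u₂ 2 + s u₂ 5 ^ 2 * s u₂ 0
          - a ^ 2 * (s u₂ 0 * s u₂ 1 + s u₂ 0 * s u₂ 2 + s u₂ 1 * s u₂ 2)) ∧
      (s u₁ 3 * s u₁ 4 * s u₁ 5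
          + a ^ 2 * (s u₁ 0 * s u₁ 5 + s u₁ 1 * s u₁ 3 + s u₁ 2 * s u₁ 4) =
        s u₂ 3 * s u₂ 4 * s u₂ 5
          + a ^ 2 * (s u₂ 0 * s u₂ 5 + s u₂ 1 * s u₂ 3 + s u₂ 2 * s u₂ 4)) := by
  have hcomp : ∀ u (i : Fin 6), HasDerivAt (fun u => s u i)
      (![s u 0 * (s u 4 - s u 3),
        s u 1 * (s u 5 - s u 4),
        s u 2 * (s u 3 - s u 5),
        a ^ 2 / 2 * (s u 2 - s u 0) + s u 3 / 2 * (s u 4 - s u 5),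
        a ^ 2 / 2 * (s u 0 - s u 1) + s u 4 / 2 * (s u 5 - s u 3),
        a ^ 2 / 2 * (s u 1 - s u 2) + s u 5 / 2 * (s u 3 - s u 4)] i) u := by
    intro u i
    exact hasDerivAt_pi.mp (hs u) i
  intro u₁ u₂
  have h0 := fun u => hcomp u 0
  have h1 := fun u => hcomp u 1
  have h2 := fun u => hcomp u 2
  have h3 := fun u => hcomp u 3
  have h4 := fun u => hcomp u 4
  have h5 := fun u => hcomp u 5
  simp only [show (5 : Fin 6) = Fin.succ 4 from rfl, show (4 : Fin 5) = Fin.succ 3 from rfl,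
    Matrix.cons_val_succ, Matrix.cons_val_zero, Matrix.cons_val_one, Matrix.head_cons,
    Matrix.cons_val_two, Matrix.tail_cons, Matrix.cons_val_three,
    Matrix.cons_val_four] at h0 h1 h2 h3 h4 h5
  refine ⟨?_, ?_, ?_, ?_⟩
  · refine const_of_hasDerivAt_zero (F := fun u => s u 0 * s u 1 * s u 2) (fun u => ?_) u₁ u₂
    have := (((h0 u).mul (h1 u)).mul (h2 u))
    refine this.congr_deriv ?_
    simp only [Pi.mul_apply, Pi.add_apply, Pi.sub_apply, Pi.pow_apply]
    ring
  · refine const_of_hasDerivAt_zero (F := fun u => s u 3 + s u 4 + s u 5) (fun u => ?_) u₁ u₂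
    have := (((h3 u).add (h4 u)).add (h5 u))
    refine this.congr_deriv ?_
    ring
  · refine const_of_hasDerivAt_zero
      (F := fun u => s u 3 ^ 2 * s u 1 + s u 4 ^ 2 * s u 2 + s u 5 ^ 2 * s u 0
        - a ^ 2 * (s u 0 * s u 1 + s u 0 * s u 2 + s u 1 * s u 2)) (fun u => ?_) u₁ u₂
    have := ((((h3 u).pow 2).mul (h1 u)).add (((h4 u).pow 2).mul (h2 u))).add
        (((h5 u).pow 2).mul (h0 u)) |>.sub
        ((((h0 u).mul (h1 u)).add ((h0 u).mul (h2 u))).add ((h1 u).mul (h2 u))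
          |>.const_mul (a ^ 2))
    refine this.congr_deriv ?_
    simp only [Pi.mul_apply, Pi.add_apply, Pi.sub_apply, Pi.pow_apply]
    ring
  · refine const_of_hasDerivAt_zero
      (F := fun u => s u 3 * s u 4 * s u 5
        + a ^ 2 * (s u 0 * s u 5 + s u 1 * s u 3 + s u 2 * s u 4)) (fun u => ?_) u₁ u₂
    have := (((h3 u).mul (h4 u)).mul (h5 u)).add
        ((((h0 u).mul (h5 u)).add ((h1 u).mul (h3 u))).add ((h2 u).mul (h4 u))
          |>.const_mul (a ^ 2))
    refine this.congr_deriv ?_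
    simp only [Pi.mul_apply, Pi.add_apply, Pi.sub_apply, Pi.pow_apply]
    ring
end

section
/- Let a ∈ ℝ, J ∈ ℝ³, and y ∈ ℝ³ with y₁, y₂, y₃ ≠ 0 and y₁ y₂ y₃ = 1. Define s₁ = y₁⁻², s₂ = y₃⁻², s₃ = y₂⁻², s₄ = y₃ J₃, s₅ = y₂ J₂, s₆ = y₁ J₁. Then: (i) s₁ s₂ s₃ = 1; (ii) s₄ + s₅ + s₆ = J₁ y₁ + J₂ y₂ + J₃ y₃; (iii) s₄² s₂ + s₅² s₃ + s₆² s₁ − a²(s₁ s₂ + s₁ s₃ + s₂ s₃) = J₁² + J₂² + J₃² − a²(y₁² + y₂² + y₃²) = H; (iv) s₄ s₅ s₆ + a²(s₁ s₆ + s₂ s₄ + s₃ s₅) = J₁ J₂ J₃ + a²(J₁/y₁ + J₂/y₂ + J₃/y₃) = K. That is, under the Flaschka-type change of variables the invariant quantities S₁, S₂, S₃, S₄ coincide respectively with the constraint, the Casimir (J,y), the Hamiltonian H and the second integral K of the deformed spherical top. -/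
/-- Under the Flaschka-type change of variables `s₁ = y₁⁻²`, `s₂ = y₃⁻²`, `s₃ = y₂⁻²`,
`s₄ = y₃J₃`, `s₅ = y₂J₂`, `s₆ = y₁J₁` (with `y₁y₂y₃ = 1` and `y₁,y₂,y₃ ≠ 0`), the
quantities `S₁, S₂, S₃, S₄` coincide respectively with the constraint `1`, the Casimir
`(J,y)`, the Hamiltonian `H = (J,J) − a²(y,y)` and the second integral
`K = J₁J₂J₃ + a²(J₁/y₁ + J₂/y₂ + J₃/y₃)` of the deformed spherical top. -/
theorem flaschka_variables_invariants (a : ℝ) (J y : Fin 3 → ℝ)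
    (hy0 : y 0 ≠ 0) (hy1 : y 1 ≠ 0) (hy2 : y 2 ≠ 0)
    (hprod : y 0 * y 1 * y 2 = 1) :
    ((y 0 ^ 2)⁻¹ * (y 2 ^ 2)⁻¹ * (y 1 ^ 2)⁻¹ = 1) ∧
    (y 2 * J 2 + y 1 * J 1 + y 0 * J 0 =
      J 0 * y 0 + J 1 * y 1 + J 2 * y 2) ∧
    ((y 2 * J 2) ^ 2 * (y 2 ^ 2)⁻¹ + (y 1 * J 1) ^ 2 * (y 1 ^ 2)⁻¹
        + (y 0 * J 0) ^ 2 * (y 0 ^ 2)⁻¹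
        - a ^ 2 * ((y 0 ^ 2)⁻¹ * (y 2 ^ 2)⁻¹ + (y 0 ^ 2)⁻¹ * (y 1 ^ 2)⁻¹
            + (y 2 ^ 2)⁻¹ * (y 1 ^ 2)⁻¹) =
      J 0 ^ 2 + J 1 ^ 2 + J 2 ^ 2 - a ^ 2 * (y 0 ^ 2 + y 1 ^ 2 + y 2 ^ 2)) ∧
    ((y 2 * J 2) * (y 1 * J 1) * (y 0 * J 0)
        + a ^ 2 * ((y 0 ^ 2)⁻¹ * (y 0 * J 0) + (y 2 ^ 2)⁻¹ * (y 2 * J 2)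
            + (y 1 ^ 2)⁻¹ * (y 1 * J 1)) =
      J 0 * J 1 * J 2 + a ^ 2 * (J 0 / y 0 + J 1 / y 1 + J 2 / y 2)) := by
  refine ⟨?_, by ring, ?_, ?_⟩
  · field_simp
    linear_combination (-(y 0 * y 1 * y 2 + 1) * hprod)
  · field_simp
    linear_combination ((y 0 * y 1 * y 2 + 1) * (a ^ 2 * (y 0 ^ 2 + y 1 ^ 2 + y 2 ^ 2))) * hprod
  · field_simp
    linear_combination (J 0 * J 1 * J 2 * (y 0 * y 1 * y 2)) * hprod
end
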